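/- Let 𝒞 = (C_1, …, C_k) be an edge clique cover of a finite simple graph G = (V,E) with m edges and maximum degree Δ. If 𝒞 is locally minimal, then the number of individual assignments of edges to cliques of 𝒞 is at most mΔ, i.e., Σ_{{x,y} ∈ E} |{ l ∈ {1,…,k} : {x,y} ⊆ C_l }| ≤ mΔ. -/

import Mathlib

/-- An edge clique cover of a simple graph `G`: a finite indexed family of cliques
such that every edge of `G` has both endpoints in some member of the family. -/
def IsEdgeCliqueCover {V : Type*} (G : SimpleGraph V) {k : ℕ} (C : Fin k → Finset V) : Prop :=
  (∀ l, G.IsClique (C l : Set V)) ∧ ∀ ⦃x y : V⦄, G.Adj x y → ∃ l, x ∈ C l ∧ y ∈ C l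

/-- One step of the locally minimal construction: processing the edge `{x, y}`.
If the edge is already contained in some clique of the current family, nothing changes;
otherwise, if some clique of the family can absorb the edge (the union is still a clique),
exactly one such clique is replaced by its extension; otherwise the new clique `{x, y}`
is appended. -/
inductive LMStep {V : Type*} [DecidableEq V] (G : SimpleGraph V) :
    List (Finset V) → V → V → List (Finset V) → Prop
  | covered (cc : List (Finset V)) (x y : V)
      (h : ∃ D ∈ cc, x ∈ D ∧ y ∈ D) :
      LMStep G cc x y cc
  | extend (pre post : List (Finset V)) (D : Finset V) (x y : V)
      (hnc : ∀ D' ∈ pre ++ D :: post, ¬ (x ∈ D' ∧ y ∈ D'))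
      (hcl : G.IsClique ((D ∪ {x, y} : Finset V) : Set V)) :
      LMStep G (pre ++ D :: post) x y (pre ++ (D ∪ {x, y}) :: post)
  | newClique (cc : List (Finset V)) (x y : V)
      (hnc : ∀ D ∈ cc, ¬ (x ∈ D ∧ y ∈ D))
      (hext : ∀ D ∈ cc, ¬ G.IsClique ((D ∪ {x, y} : Finset V) : Set V)) :
      LMStep G cc x y (cc ++ [({x, y} : Finset V)])

/-- `LMRun G cc es cc'` means: starting from the family `cc` and processing the edges in
the list `es` one by one according to the locally minimal construction, one can obtain
the family `cc'`. -/
inductive LMRun {V : Type*} [DecidableEq V] (G : SimpleGraph V) :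
    List (Finset V) → List (Sym2 V) → List (Finset V) → Prop
  | nil (cc : List (Finset V)) : LMRun G cc [] cc
  | cons (cc cc' cc'' : List (Finset V)) (x y : V) (es : List (Sym2 V))
      (hstep : LMStep G cc x y cc') (hrest : LMRun G cc' es cc'') :
      LMRun G cc (s(x, y) :: es) cc''

/-- A family of cliques `(C_1, …, C_k)` is a locally minimal clique cover of `G` if it can
be produced (as an unordered family) by the locally minimal construction, starting from the
empty family and processing the edges of `G` in some enumeration (a duplicate-free list
containing exactly the edges of `G`). -/
def IsLocallyMinimal {V : Type*} [DecidableEq V] (G : SimpleGraph V) {k : ℕ}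
    (C : Fin k → Finset V) : Prop :=
  ∃ es : List (Sym2 V), es.Nodup ∧ (∀ e, e ∈ es ↔ e ∈ G.edgeSet) ∧
    ∃ L : List (Finset V), LMRun G [] es L ∧ L.Perm (List.ofFn C)

lemma pair_card_le {V : Type*} [DecidableEq V] (x y : V) :
    ({x, y} : Finset V).card ≤ 2 := by
  apply le_trans (Finset.card_insert_le _ _); simp

lemma lmstep_sum_le {V : Type*} [DecidableEq V] {G : SimpleGraph V}
    {cc cc' : List (Finset V)} {x y : V} (h : LMStep G cc x y cc') :
    (cc'.map Finset.card).sum ≤ (cc.map Finset.card).sum + 2 := by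
  cases h with
  | covered cc x y h => exact Nat.le_add_right _ _
  | extend pre post D x y hnc hcl =>
      simp only [List.map_append, List.map_cons, List.sum_append, List.sum_cons]
      have h1 := Finset.card_union_le D ({x, y} : Finset V)
      have h2 := pair_card_le x y
      omega
  | newClique cc x y hnc hext =>
      simp only [List.map_append, List.map_cons, List.map_nil, List.sum_append,
        List.sum_cons, List.sum_nil]
      have h2 := pair_card_le x y
      omega

lemma lmrun_sum_le {V : Type*} [DecidableEq V] {G : SimpleGraph V}
    {cc cc' : List (Finset V)} {es : List (Sym2 V)} (h : LMRun G cc es cc') :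
    (cc'.map Finset.card).sum ≤ (cc.map Finset.card).sum + 2 * es.length := by
  induction h with
  | nil cc => simp
  | cons cc cc' cc'' x y es hstep hrest ih =>
      have h1 := lmstep_sum_le hstep
      simp only [List.length_cons]
      omega

lemma per_clique_bound {V : Type*} [Fintype V] [DecidableEq V] (G : SimpleGraph V)
    [DecidableRel G.Adj] (D : Finset V) :
    (G.edgeFinset.filter (fun e => ∀ v ∈ e, v ∈ D)).card * 2 ≤ D.card * G.maxDegree := by
  classical
  set S := G.edgeFinset.filter (fun e => ∀ v ∈ e, v ∈ D) with hS
  calc S.card * 2 = ∑ e ∈ S, 2 := by rw [Finset.sum_const, smul_eq_mul, mul_comm]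
    _ = ∑ e ∈ S, (D.filter (· ∈ e)).card := by
        apply Finset.sum_congr rfl
        intro e he
        simp only [hS, Finset.mem_filter, SimpleGraph.mem_edgeFinset] at he
        obtain ⟨he1, he2⟩ := he
        induction e with
        | _ x y =>
          have hxy : x ≠ y := by
            intro h; subst h
            exact G.loopless.irrefl x (G.mem_edgeSet.mp (by simpa using he1))
          have hx : x ∈ D := he2 x (by simp)
          have hy : y ∈ D := he2 y (by simp)
          have : D.filter (· ∈ s(x, y)) = {x, y} := by
            ext v
            simp only [Finset.mem_filter, Sym2.mem_iff, Finset.mem_insert,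
              Finset.mem_singleton]
            constructor
            · rintro ⟨_, h | h⟩ <;> simp [h]
            · rintro (h | h) <;> subst h <;> simp [hx, hy]
          rw [this, Finset.card_insert_of_notMem (by simpa using hxy),
            Finset.card_singleton]
    _ = ∑ v ∈ D, (S.filter (fun e => v ∈ e)).card := by
        simp only [Finset.card_filter]
        exact Finset.sum_comm
    _ ≤ ∑ v ∈ D, G.maxDegree := by
        apply Finset.sum_le_sum
        intro v hv
        have h1 : (S.filter (fun e => v ∈ e)).card ≤ G.degree v := by
          rw [← SimpleGraph.card_incidenceFinset_eq_degree]
          apply Finset.card_le_card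
          intro e he
          simp only [hS, Finset.mem_filter, SimpleGraph.mem_edgeFinset] at he
          rw [SimpleGraph.mem_incidenceFinset]
          exact ⟨he.1.1, he.2⟩
        exact h1.trans (G.degree_le_maxDegree v)
    _ = D.card * G.maxDegree := by rw [Finset.sum_const, smul_eq_mul]

/-- If an edge clique cover `(C_1, …, C_k)` of a finite simple graph `G` with `m` edges
and maximum degree `Δ` is locally minimal, then the number of individual assignments of
edges to cliques is at most `mΔ`, i.e.
`Σ_{e ∈ E} |{ l : both endpoints of e lie in C_l }| ≤ mΔ`. -/
theorem locallyMinimal_edge_assignments_le {V : Type*} [Fintype V] [DecidableEq V]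
    (G : SimpleGraph V) [DecidableRel G.Adj] {k : ℕ} (C : Fin k → Finset V)
    (hcov : IsEdgeCliqueCover G C) (hlm : IsLocallyMinimal G C) :
    ∑ e ∈ G.edgeFinset, {l : Fin k | ∀ v ∈ e, v ∈ C l}.ncard ≤
      G.edgeFinset.card * G.maxDegree := by
  classical
  obtain ⟨es, hnd, hmem, L, hrun, hperm⟩ := hlm
  -- total size of the cliques is at most 2m
  have hlen : es.length = G.edgeFinset.card := by
    have hts : es.toFinset = G.edgeFinset := by
      ext e
      simp [hmem e, SimpleGraph.mem_edgeFinset]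
    rw [← hts, List.card_toFinset, List.dedup_eq_self.mpr hnd]
  have hsumC : ∑ l : Fin k, (C l).card ≤ 2 * G.edgeFinset.card := by
    have h1 := lmrun_sum_le hrun
    have h2 : (L.map Finset.card).sum = ((List.ofFn C).map Finset.card).sum :=
      (hperm.map Finset.card).sum_eq
    have h3 : ((List.ofFn C).map Finset.card).sum = ∑ l : Fin k, (C l).card := by
      rw [List.map_ofFn]
      exact List.sum_ofFn
    simp only [List.map_nil, List.sum_nil, Nat.zero_add] at h1
    omega
  -- rewrite LHS as a sum over cliques
  have hswap : ∑ e ∈ G.edgeFinset, {l : Fin k | ∀ v ∈ e, v ∈ C l}.ncard =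
      ∑ l : Fin k, (G.edgeFinset.filter (fun e => ∀ v ∈ e, v ∈ C l)).card := by
    have h1 : ∀ e : Sym2 V, {l : Fin k | ∀ v ∈ e, v ∈ C l}.ncard =
        (Finset.univ.filter (fun l : Fin k => ∀ v ∈ e, v ∈ C l)).card := by
      intro e
      rw [Set.ncard_eq_toFinset_card', Set.toFinset_setOf]
    simp only [h1, Finset.card_filter]
    exact Finset.sum_comm
  rw [hswap]
  have hle : (∑ l : Fin k, (G.edgeFinset.filter (fun e => ∀ v ∈ e, v ∈ C l)).card) * 2 ≤
      G.edgeFinset.card * G.maxDegree * 2 := by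
    rw [Finset.sum_mul]
    calc ∑ l : Fin k, (G.edgeFinset.filter (fun e => ∀ v ∈ e, v ∈ C l)).card * 2
        ≤ ∑ l : Fin k, (C l).card * G.maxDegree :=
          Finset.sum_le_sum fun l _ => per_clique_bound G (C l)
      _ = (∑ l : Fin k, (C l).card) * G.maxDegree := by rw [Finset.sum_mul]
      _ ≤ 2 * G.edgeFinset.card * G.maxDegree :=
          Nat.mul_le_mul_right _ hsumC
      _ = G.edgeFinset.card * G.maxDegree * 2 := by ring
  omega
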